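/- For every u ∈ N and every v ∈ V with P⁺v ≠ 0, there exists a unique v₀ ∈ F_u(v) such that (u, v₀) ∈ 𝒩; moreover v₀ is the unique maximizer of E₂(u,·) on F_u(v). -/

import Mathlib

open scoped InnerProductSpace
open Filter Topology

theorem wsc {V : Type*} [NormedAddCommGroup V] [InnerProductSpace ℝ V] [CompleteSpace V]
    (x : ℕ → V) (C : ℝ) (hC : ∀ n, ‖x n‖ ≤ C) :
    ∃ (z : V) (φ : ℕ → ℕ), StrictMono φ ∧
      ∀ y : V, Tendsto (fun k => ⟪x (φ k), y⟫_ℝ) atTop (𝓝 ⟪z, y⟫_ℝ) := by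
  have hC0 : 0 ≤ C := le_trans (norm_nonneg _) (hC 0)
  set g : ℕ → (ℕ → ℝ) := fun n m => ⟪x n, x m⟫_ℝ with hg
  have hgmem : ∀ n, g n ∈ Set.univ.pi (fun _ : ℕ => Set.Icc (-(C*C)) (C*C)) := by
    intro n m _
    have h1 := abs_real_inner_le_norm (x n) (x m)
    have h2 : ‖x n‖ * ‖x m‖ ≤ C * C :=
      mul_le_mul (hC n) (hC m) (norm_nonneg _) hC0
    have := abs_le.mp (le_trans h1 h2)
    exact ⟨this.1, this.2⟩
  have hcomp : IsCompact (Set.univ.pi (fun _ : ℕ => Set.Icc (-(C*C)) (C*C))) :=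
    isCompact_univ_pi (fun _ => isCompact_Icc)
  obtain ⟨L, _, φ, hφ, hL⟩ := hcomp.tendsto_subseq hgmem
  have hLm : ∀ m, Tendsto (fun k => ⟪x (φ k), x m⟫_ℝ) atTop (𝓝 (L m)) :=
    fun m => (tendsto_pi_nhds.mp hL) m
  set D : Set V := {y : V | ∃ l : ℝ, Tendsto (fun k => ⟪x (φ k), y⟫_ℝ) atTop (𝓝 l)} with hD
  have hDadd : ∀ y z : V, y ∈ D → z ∈ D → y + z ∈ D := by
    rintro y z ⟨ly, hy⟩ ⟨lz, hz⟩
    exact ⟨ly + lz, by simpa [inner_add_right] using hy.add hz⟩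
  have hDsmul : ∀ (r : ℝ) (y : V), y ∈ D → r • y ∈ D := by
    rintro r y ⟨ly, hy⟩
    exact ⟨r * ly, by simpa [real_inner_smul_right] using hy.const_mul r⟩
  have hDx : ∀ m, x m ∈ D := fun m => ⟨L m, hLm m⟩
  have hDspan : (Submodule.span ℝ (Set.range x) : Set V) ⊆ D := by
    intro y hy
    induction hy using Submodule.span_induction with
    | mem y hy => obtain ⟨m, rfl⟩ := hy; exact hDx m
    | zero => exact ⟨0, by simpa [inner_zero_right] using tendsto_const_nhds⟩
    | add y z _ _ hy hz => exact hDadd y z hy hz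
    | smul r y _ hy => exact hDsmul r y hy
  have hDclos : ∀ y ∈ closure (Submodule.span ℝ (Set.range x) : Set V), y ∈ D := by
    intro y hy
    have hcs : CauchySeq (fun k => ⟪x (φ k), y⟫_ℝ) := by
      rw [Metric.cauchySeq_iff]
      intro ε hε
      obtain ⟨y', hy', hyy'⟩ := Metric.mem_closure_iff.mp hy (ε / (4 * (C + 1)))
        (by positivity)
      obtain ⟨l, hl⟩ := hDspan hy'
      obtain ⟨N, hN⟩ := Metric.cauchySeq_iff.mp hl.cauchySeq (ε / 4) (by positivity)
      refine ⟨N, fun k hk l' hl' => ?_⟩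
      have key : ∀ j, |⟪x (φ j), y⟫_ℝ - ⟪x (φ j), y'⟫_ℝ| ≤ C * ‖y - y'‖ := by
        intro j
        rw [← inner_sub_right]
        exact le_trans (abs_real_inner_le_norm _ _)
          (mul_le_mul_of_nonneg_right (hC _) (norm_nonneg _))
      have h1 := key k
      have h2 := key l'
      have h3 := hN k hk l' hl'
      rw [Real.dist_eq] at h3 ⊢
      have hyn : ‖y - y'‖ < ε / (4 * (C + 1)) := by
        rw [← dist_eq_norm]; exact hyy'
      have hmul : ε / (4 * (C + 1)) * (4 * (C + 1)) = ε :=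
        div_mul_cancel₀ _ (by positivity)
      have hC1 : C * ‖y - y'‖ ≤ ε / 4 := by nlinarith [norm_nonneg (y - y')]
      have tri : |⟪x (φ k), y⟫_ℝ - ⟪x (φ l'), y⟫_ℝ| ≤
          |⟪x (φ k), y⟫_ℝ - ⟪x (φ k), y'⟫_ℝ| + |⟪x (φ k), y'⟫_ℝ - ⟪x (φ l'), y'⟫_ℝ|
          + |⟪x (φ l'), y'⟫_ℝ - ⟪x (φ l'), y⟫_ℝ| := by
        have := abs_sub_le (⟪x (φ k), y⟫_ℝ) (⟪x (φ k), y'⟫_ℝ) (⟪x (φ l'), y⟫_ℝ)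
        have := abs_sub_le (⟪x (φ k), y'⟫_ℝ) (⟪x (φ l'), y'⟫_ℝ) (⟪x (φ l'), y⟫_ℝ)
        -- chain
        calc |⟪x (φ k), y⟫_ℝ - ⟪x (φ l'), y⟫_ℝ|
            ≤ |⟪x (φ k), y⟫_ℝ - ⟪x (φ k), y'⟫_ℝ| + |⟪x (φ k), y'⟫_ℝ - ⟪x (φ l'), y⟫_ℝ| :=
              abs_sub_le _ _ _
          _ ≤ _ := by
              have := abs_sub_le (⟪x (φ k), y'⟫_ℝ) (⟪x (φ l'), y'⟫_ℝ) (⟪x (φ l'), y⟫_ℝ)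
              linarith
      have h2' : |⟪x (φ l'), y'⟫_ℝ - ⟪x (φ l'), y⟫_ℝ| ≤ C * ‖y - y'‖ := by
        rw [abs_sub_comm]; exact h2
      calc |⟪x (φ k), y⟫_ℝ - ⟪x (φ l'), y⟫_ℝ| ≤ _ := tri
        _ < ε := by linarith
    exact cauchySeq_tendsto_of_complete hcs
  -- every y is in D
  set T := (Submodule.span ℝ (Set.range x)).topologicalClosure with hT
  haveI : CompleteSpace T :=
    (Submodule.span ℝ (Set.range x)).isClosed_topologicalClosure.completeSpace_coe
  have hDall : ∀ y : V, y ∈ D := by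
    intro y
    have hdec : (Submodule.orthogonalProjection T y : V) + (y - Submodule.orthogonalProjection T y) = y := by
      abel
    have hmem1 : ((Submodule.orthogonalProjection T y : V)) ∈ D :=
      hDclos _ (Submodule.orthogonalProjection T y).2
    have hmem2 : (y - Submodule.orthogonalProjection T y) ∈ D := by
      refine ⟨0, ?_⟩
      have horth := Submodule.sub_starProjection_mem_orthogonal (K := T) y
      have : ∀ k, ⟪x (φ k), y - Submodule.orthogonalProjection T y⟫_ℝ = 0 := by
        intro k
        have hxk : x (φ k) ∈ T :=
          Submodule.le_topologicalClosure _ (Submodule.subset_span ⟨φ k, rfl⟩)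
        exact horth (x (φ k)) hxk
      simpa only [this] using (tendsto_const_nhds : Tendsto (fun _ : ℕ => (0:ℝ)) atTop (𝓝 0))
    have := hDadd _ _ hmem1 hmem2
    rwa [hdec] at this
  -- build the limit functional
  choose lim hlim using hDall
  have hlim_add : ∀ y z : V, lim (y + z) = lim y + lim z := by
    intro y z
    exact tendsto_nhds_unique (hlim (y + z))
      (by simpa [inner_add_right] using (hlim y).add (hlim z))
  have hlim_smul : ∀ (r : ℝ) (y : V), lim (r • y) = r * lim y := by
    intro r y
    exact tendsto_nhds_unique (hlim (r • y))
      (by simpa [real_inner_smul_right] using (hlim y).const_mul r)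
  have hlim_bound : ∀ y : V, |lim y| ≤ C * ‖y‖ := by
    intro y
    have : ∀ k, |⟪x (φ k), y⟫_ℝ| ≤ C * ‖y‖ := fun k =>
      le_trans (abs_real_inner_le_norm _ _)
        (mul_le_mul_of_nonneg_right (hC _) (norm_nonneg _))
    exact le_of_tendsto ((hlim y).abs) (Eventually.of_forall this)
  let ℓ : V →L[ℝ] ℝ := LinearMap.mkContinuous
    { toFun := lim, map_add' := hlim_add, map_smul' := hlim_smul } C
    (fun y => by simpa using hlim_bound y)
  refine ⟨(InnerProductSpace.toDual ℝ V).symm ℓ, φ, hφ, fun y => ?_⟩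
  have : ⟪(InnerProductSpace.toDual ℝ V).symm ℓ, y⟫_ℝ = ℓ y :=
    InnerProductSpace.toDual_symm_apply
  rw [this]
  exact hlim y

theorem b_repr
    {W : Type*} [NormedAddCommGroup W] [InnerProductSpace ℝ W]
    {V : Type*} [NormedAddCommGroup V] [InnerProductSpace ℝ V]
    {N : Type*} [NormedAddCommGroup N] [InnerProductSpace ℝ N]
    (ι : V →L[ℝ] W) (b : N → V → ℝ) (f : N → ℝ → ℝ)
    (hb_C2 : ContDiff ℝ 2 (fun q : N × V => b q.1 q.2))
    (hb_zero : ∀ u : N, b u 0 = 0)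
    (hf_cont : ContinuousOn (fun q : N × ℝ => f q.1 q.2) (Set.univ ×ˢ Set.Ici (0:ℝ)))
    (hgrad : ∀ (u : N) (v h : V), fderiv ℝ (b u) v h = f u ‖ι v‖ * ⟪ι v, ι h⟫_ℝ)
    (u : N) (y : V) :
    b u y = ∫ τ in (0:ℝ)..‖ι y‖, f u τ * τ := by
  have hbu : ContDiff ℝ 2 (b u) := hb_C2.comp (contDiff_const.prodMk contDiff_id)
  have hdiff : ∀ z : V, HasFDerivAt (b u) (fderiv ℝ (b u) z) z := fun z =>
    ((hbu.differentiable (by norm_num)) z).hasFDerivAt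
  set r := ‖ι y‖ with hrdef
  have hr : 0 ≤ r := norm_nonneg _
  have hline : ∀ s ∈ Set.uIcc (0:ℝ) 1,
      HasDerivAt (fun s : ℝ => b u (s • y)) (f u (s * r) * (s * r ^ 2)) s := by
    intro s hs
    rw [Set.uIcc_of_le zero_le_one] at hs
    have h1 : HasDerivAt (fun s : ℝ => s • y) y s := by
      simpa using (hasDerivAt_id s).smul_const y
    have h2 := (hdiff (s • y)).comp_hasDerivAt s h1
    have h3 : fderiv ℝ (b u) (s • y) y = f u (s * r) * (s * r ^ 2) := by
      rw [hgrad]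
      have e1 : ‖ι (s • y)‖ = s * r := by
        rw [map_smul, norm_smul, Real.norm_eq_abs, abs_of_nonneg hs.1]
      have e2 : ⟪ι (s • y), ι y⟫_ℝ = s * r ^ 2 := by
        rw [map_smul, real_inner_smul_left, real_inner_self_eq_norm_sq]
      rw [e1, e2]
    rwa [h3] at h2
  have hfc : ContinuousOn (fun τ : ℝ => f u τ) (Set.Ici (0:ℝ)) := by
    have : ContinuousOn (fun τ : ℝ => (fun q : N × ℝ => f q.1 q.2) (u, τ)) (Set.Ici 0) := by
      apply hf_cont.comp (Continuous.continuousOn (by continuity))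
      intro τ hτ
      exact ⟨Set.mem_univ _, hτ⟩
    exact this
  have hcont : ContinuousOn (fun s : ℝ => f u (s * r) * (s * r ^ 2)) (Set.uIcc (0:ℝ) 1) := by
    rw [Set.uIcc_of_le zero_le_one]
    apply ContinuousOn.mul
    · apply hfc.comp (Continuous.continuousOn (by continuity))
      intro s hs
      exact mul_nonneg hs.1 hr
    · exact Continuous.continuousOn (by continuity)
  have hFTC := intervalIntegral.integral_eq_sub_of_hasDerivAt hline hcont.intervalIntegrable
  have hby : b u y = ∫ s in (0:ℝ)..1, f u (s * r) * (s * r ^ 2) := by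
    rw [hFTC]
    simp [hb_zero u]
  rw [hby]
  have hchg : (r • ∫ s in (0:ℝ)..1, (fun τ => f u τ * τ) (r * s)) =
      ∫ τ in (r * 0)..(r * 1), f u τ * τ :=
    intervalIntegral.smul_integral_comp_mul_left (fun τ => f u τ * τ) r
  have : ∀ s : ℝ, f u (s * r) * (s * r ^ 2) = r * ((fun τ => f u τ * τ) (r * s)) := by
    intro s; simp only []; ring_nf
  rw [intervalIntegral.integral_congr (g := fun s => r * ((fun τ => f u τ * τ) (r * s)))
    (fun s _ => this s)]
  rw [intervalIntegral.integral_const_mul]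
  have := hchg
  rw [mul_zero, mul_one] at this
  rw [← this]
  simp [smul_eq_mul]

theorem J_gap
    {N : Type*} [NormedAddCommGroup N] [InnerProductSpace ℝ N]
    (f : N → ℝ → ℝ)
    (hf_cont : ContinuousOn (fun q : N × ℝ => f q.1 q.2) (Set.univ ×ˢ Set.Ici (0:ℝ)))
    (hf_mono : ∀ u : N, StrictMonoOn (f u) (Set.Ici (0:ℝ)))
    (hf_nonneg : ∀ (u : N) (t : ℝ), 0 ≤ t → 0 ≤ f u t)
    (u : N) {r₁ r₂ : ℝ} (h1 : 0 ≤ r₁) (h2 : 0 ≤ r₂) (hne : r₁ ≠ r₂) :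
    f u r₁ * ((r₂ ^ 2 - r₁ ^ 2) / 2) + (∫ τ in (0:ℝ)..r₁, f u τ * τ)
      < ∫ τ in (0:ℝ)..r₂, f u τ * τ := by
  have hfc : ContinuousOn (fun τ : ℝ => f u τ) (Set.Ici (0:ℝ)) := by
    have : ContinuousOn (fun τ : ℝ => (fun q : N × ℝ => f q.1 q.2) (u, τ)) (Set.Ici 0) := by
      apply hf_cont.comp (Continuous.continuousOn (by continuity))
      intro τ hτ
      exact ⟨Set.mem_univ _, hτ⟩
    exact this
  have hgc : ContinuousOn (fun τ : ℝ => f u τ * τ) (Set.Ici (0:ℝ)) :=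
    hfc.mul continuousOn_id
  have hint : ∀ s t : ℝ, 0 ≤ s → 0 ≤ t → IntervalIntegrable (fun τ => f u τ * τ)
      MeasureTheory.volume s t := by
    intro s t hs ht
    apply ContinuousOn.intervalIntegrable
    apply hgc.mono
    intro z hz
    rcases Set.mem_uIcc.mp hz with h | h
    · exact le_trans hs h.1
    · exact le_trans ht h.1
  have hsub : (∫ τ in (0:ℝ)..r₂, f u τ * τ) - (∫ τ in (0:ℝ)..r₁, f u τ * τ)
      = ∫ τ in r₁..r₂, f u τ * τ :=
    intervalIntegral.integral_interval_sub_left (hint 0 r₂ le_rfl h2) (hint 0 r₁ le_rfl h1)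
  have hconst : ∫ τ in r₁..r₂, f u r₁ * τ = f u r₁ * ((r₂ ^ 2 - r₁ ^ 2) / 2) := by
    rw [intervalIntegral.integral_const_mul, integral_id]
  rw [← sub_pos]
  have key : (∫ τ in r₁..r₂, f u r₁ * τ) < ∫ τ in r₁..r₂, f u τ * τ := by
    rcases lt_or_gt_of_ne hne with hlt | hgt
    · apply intervalIntegral.integral_lt_integral_of_continuousOn_of_le_of_exists_lt hlt
      · exact continuousOn_const.mul continuousOn_id
      · exact hgc.mono (fun z hz => le_trans h1 hz.1)
      · intro τ hτ
        have hτ0 : 0 ≤ τ := le_trans h1 hτ.1.le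
        exact mul_le_mul_of_nonneg_right
          ((hf_mono u).le_iff_le (Set.mem_Ici.mpr h1) (Set.mem_Ici.mpr hτ0) |>.mpr hτ.1.le) hτ0
      · refine ⟨(r₁ + r₂) / 2, Set.mem_Icc.mpr ⟨by linarith, by linarith⟩, ?_⟩
        have hmid : r₁ < (r₁ + r₂) / 2 := by linarith
        have hmid0 : (0:ℝ) < (r₁ + r₂) / 2 := by linarith
        exact mul_lt_mul_of_pos_right
          (hf_mono u (Set.mem_Ici.mpr h1) (Set.mem_Ici.mpr (by linarith)) hmid) hmid0
    · -- r₂ < r₁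
      rw [intervalIntegral.integral_symm r₂ r₁, intervalIntegral.integral_symm r₂ r₁,
        neg_lt_neg_iff]
      apply intervalIntegral.integral_lt_integral_of_continuousOn_of_le_of_exists_lt hgt
      · exact hgc.mono (fun z hz => le_trans h2 hz.1)
      · exact continuousOn_const.mul continuousOn_id
      · intro τ hτ
        have hτ0 : 0 ≤ τ := le_trans h2 hτ.1.le
        exact mul_le_mul_of_nonneg_right
          ((hf_mono u).le_iff_le (Set.mem_Ici.mpr hτ0) (Set.mem_Ici.mpr h1) |>.mpr hτ.2) hτ0
      · refine ⟨(r₂ + r₁) / 2, Set.mem_Icc.mpr ⟨by linarith, by linarith⟩, ?_⟩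
        have hmid0 : (0:ℝ) < (r₂ + r₁) / 2 := by linarith
        exact mul_lt_mul_of_pos_right
          (hf_mono u (Set.mem_Ici.mpr (by linarith)) (Set.mem_Ici.mpr h1) (by linarith)) hmid0
  linarith [hsub, hconst, key]

theorem strict_max
    {W : Type*} [NormedAddCommGroup W] [InnerProductSpace ℝ W]
    {V : Type*} [NormedAddCommGroup V] [InnerProductSpace ℝ V]
    {N : Type*} [NormedAddCommGroup N] [InnerProductSpace ℝ N]
    (ι : V →L[ℝ] W) (hι : Function.Injective ι)
    (Pp Pm : V →L[ℝ] V)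
    (hP_sum : ∀ v : V, Pp v + Pm v = v)
    (a : V →L[ℝ] V →L[ℝ] ℝ)
    (ha : ∀ v w : V, a v w = ⟪Pp v, Pp w⟫_ℝ - ⟪Pm v, Pm w⟫_ℝ)
    (b : N → V → ℝ) (f : N → ℝ → ℝ)
    (hf_mono : ∀ u : N, StrictMonoOn (f u) (Set.Ici (0:ℝ)))
    (hf_nonneg : ∀ (u : N) (t : ℝ), 0 ≤ t → 0 ≤ f u t)
    (hrepr : ∀ (u : N) (y : V), b u y = ∫ τ in (0:ℝ)..‖ι y‖, f u τ * τ)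
    (hgap : ∀ (u : N) {r₁ r₂ : ℝ}, 0 ≤ r₁ → 0 ≤ r₂ → r₁ ≠ r₂ →
      f u r₁ * ((r₂ ^ 2 - r₁ ^ 2) / 2) + (∫ τ in (0:ℝ)..r₁, f u τ * τ)
        < ∫ τ in (0:ℝ)..r₂, f u τ * τ)
    (u : N) (x : V)
    (hxPp : Pp x ≠ 0)
    (hxN1 : a x x = f u ‖ι x‖ * ⟪ι x, ι x⟫_ℝ)
    (hxN2 : ∀ φ : V, Pm φ = φ → a x φ = f u ‖ι x‖ * ⟪ι x, ι φ⟫_ℝ)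
    (s : ℝ) (hs : 0 ≤ s) (w' : V) (hw' : Pm w' = w')
    (hne : s • x + w' ≠ x) :
    (1/2 : ℝ) * a (s • x + w') (s • x + w') - b u (s • x + w')
      < (1/2 : ℝ) * a x x - b u x := by
  set y := s • x + w' with hy
  have hx0 : x ≠ 0 := fun h => hxPp (by simp [h])
  have hιx : ι x ≠ 0 := fun h => hx0 (hι (by simpa using h))
  set r₁ := ‖ι x‖ with hr₁
  set r₂ := ‖ι y‖ with hr₂
  have hr₁pos : 0 < r₁ := norm_pos_iff.mpr hιx
  have hPpw' : Pp w' = 0 := by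
    have h := hP_sum w'
    rw [hw'] at h
    have h2 : Pp w' = w' - w' := eq_sub_of_add_eq h
    simpa using h2
  -- symmetry of a
  have hasymm : ∀ z₁ z₂ : V, a z₁ z₂ = a z₂ z₁ := by
    intro z₁ z₂
    rw [ha, ha, real_inner_comm (Pp z₁), real_inner_comm (Pm z₁)]
  have haww : a w' w' = -‖w'‖ ^ 2 := by
    rw [ha, hPpw', hw']
    simp [real_inner_self_eq_norm_sq]
  -- expand a y y
  have hayy : a y y = s ^ 2 * a x x + 2 * s * a x w' + a w' w' := by
    rw [hy]
    simp only [map_add, map_smul, ContinuousLinearMap.add_apply, ContinuousLinearMap.smul_apply,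
      smul_eq_mul]
    rw [hasymm w' x]
    ring
  have haxw : a x w' = f u r₁ * ⟪ι x, ι w'⟫_ℝ := hxN2 w' hw'
  have hixx : ⟪ι x, ι x⟫_ℝ = r₁ ^ 2 := real_inner_self_eq_norm_sq _
  -- norm expansion
  have hr₂sq : r₂ ^ 2 = s ^ 2 * r₁ ^ 2 + 2 * s * ⟪ι x, ι w'⟫_ℝ + ‖ι w'‖ ^ 2 := by
    rw [hr₂, hy]
    rw [map_add, map_smul]
    rw [norm_add_sq_real]
    rw [norm_smul, real_inner_smul_left]
    simp only [Real.norm_eq_abs, abs_of_nonneg hs]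
    rw [mul_pow]
    ring
  have hbx : b u x = ∫ τ in (0:ℝ)..r₁, f u τ * τ := hrepr u x
  have hby : b u y = ∫ τ in (0:ℝ)..r₂, f u τ * τ := hrepr u y
  have hF₁ : 0 ≤ f u r₁ := hf_nonneg u r₁ hr₁pos.le
  by_cases hrr : r₁ = r₂
  · -- equal norms: w' ≠ 0
    have hw'0 : w' ≠ 0 := by
      intro h
      rw [h, add_zero] at hy
      have : r₂ = s * r₁ := by
        rw [hr₂, hy, map_smul, norm_smul, Real.norm_eq_abs, abs_of_nonneg hs]
      have h2 : s * r₁ = 1 * r₁ := by rw [one_mul]; exact this.symm.trans hrr.symm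
      have hs1 : s = 1 := mul_right_cancel₀ hr₁pos.ne' h2
      exact hne (by rw [hy, hs1, one_smul])
    have hgapeq : b u y - b u x = f u r₁ * ((r₂ ^ 2 - r₁ ^ 2) / 2) := by
      rw [hbx, hby, hrr]
      simp
    have hw'pos : 0 < ‖w'‖ ^ 2 := pow_pos (norm_pos_iff.mpr hw'0) 2
    have hιw2 : 0 ≤ f u r₁ * ‖ι w'‖ ^ 2 := by positivity
    have key : (1/2:ℝ) * a y y - (1/2) * a x x - (b u y - b u x)
        = - (1/2) * ‖w'‖ ^ 2 - f u r₁ * ‖ι w'‖ ^ 2 / 2 := by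
      rw [hayy, haww, haxw, hxN1, hixx, hgapeq, hr₂sq]
      ring
    nlinarith [key]
  · -- distinct norms: strict gap
    have hgaps := hgap u (norm_nonneg (ι x)) (norm_nonneg (ι y)) hrr
    rw [← hbx, ← hby] at hgaps
    -- hgaps : f u r₁ * ((r₂^2 - r₁^2)/2) + b u x < b u y
    have key : (1/2:ℝ) * a y y - (1/2) * a x x
        = f u r₁ * ((r₂ ^ 2 - r₁ ^ 2) / 2) - f u r₁ * ‖ι w'‖ ^ 2 / 2 - (1/2) * ‖w'‖ ^ 2 := by
      rw [hayy, haww, haxw, hxN1, hixx, hr₂sq]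
      ring
    have h1 : 0 ≤ f u r₁ * ‖ι w'‖ ^ 2 := by positivity
    have h2 : 0 ≤ ‖w'‖ ^ 2 := by positivity
    linarith [key, hgaps]

theorem bounded_of_E_ge
    {W : Type*} [NormedAddCommGroup W] [InnerProductSpace ℝ W]
    {V : Type*} [NormedAddCommGroup V] [InnerProductSpace ℝ V] [CompleteSpace V]
    {N : Type*} [NormedAddCommGroup N] [InnerProductSpace ℝ N]
    (ι : V →L[ℝ] W)
    (Pp Pm : V →L[ℝ] V)
    (hP_sum : ∀ v : V, Pp v + Pm v = v)
    (hPp_idem : ∀ v : V, Pp (Pp v) = Pp v)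
    (hPm_idem : ∀ v : V, Pm (Pm v) = Pm v)
    (hP_orth : ∀ v w : V, ⟪Pp v, Pm w⟫_ℝ = 0)
    (a : V →L[ℝ] V →L[ℝ] ℝ)
    (ha : ∀ v w : V, a v w = ⟪Pp v, Pp w⟫_ℝ - ⟪Pm v, Pm w⟫_ℝ)
    (b : N → V → ℝ) (f : N → ℝ → ℝ)
    (hb_nonneg : ∀ (u : N) (v : V), 0 ≤ b u v)
    (hb_super : ∀ (u : N) (vseq : ℕ → V) (v : V), v ≠ 0 →
      (∀ y : V, Tendsto (fun n => ⟪vseq n, y⟫_ℝ) atTop (𝓝 ⟪v, y⟫_ℝ)) →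
      ∀ s : ℕ → ℝ, Tendsto s atTop atTop →
      Tendsto (fun n => b u (s n • vseq n) / (s n) ^ 2) atTop atTop)
    (u : N) (v : V) (hv : Pp v ≠ 0)
    (x : ℕ → V)
    (hxF : ∀ n, ∃ (t : ℝ) (w : V), 0 ≤ t ∧ Pm w = w ∧ x n = t • v + w)
    (δ : ℝ) (hδ : 0 < δ)
    (hE : ∀ n, δ ≤ (1/2 : ℝ) * a (x n) (x n) - b u (x n)) :
    ∃ C, ∀ n, ‖x n‖ ≤ C := by
  -- basic projection facts
  have hnormsq : ∀ z : V, ‖z‖ ^ 2 = ‖Pp z‖ ^ 2 + ‖Pm z‖ ^ 2 := by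
    intro z
    have : z = Pp z + Pm z := (hP_sum z).symm
    calc ‖z‖ ^ 2 = ‖Pp z + Pm z‖ ^ 2 := by rw [← this]
      _ = ‖Pp z‖ ^ 2 + 2 * ⟪Pp z, Pm z⟫_ℝ + ‖Pm z‖ ^ 2 := norm_add_sq_real _ _
      _ = ‖Pp z‖ ^ 2 + ‖Pm z‖ ^ 2 := by rw [hP_orth]; ring
  have haself : ∀ z : V, a z z = ‖Pp z‖ ^ 2 - ‖Pm z‖ ^ 2 := by
    intro z
    rw [ha, real_inner_self_eq_norm_sq, real_inner_self_eq_norm_sq]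
  by_contra hcon
  push_neg at hcon
  have hsel : ∀ k : ℕ, ∃ n, (k : ℝ) < ‖x n‖ := by
    intro k
    obtain ⟨n, hn⟩ := hcon (k : ℝ)
    exact ⟨n, hn⟩
  choose g hg using hsel
  set y : ℕ → V := fun k => x (g k) with hy
  have hypos : ∀ k, 0 < ‖y k‖ := fun k => lt_of_le_of_lt (Nat.cast_nonneg k) (hg k)
  set z : ℕ → V := fun k => (‖y k‖)⁻¹ • y k with hz
  have hznorm : ∀ k, ‖z k‖ = 1 := by
    intro k
    rw [hz]
    simp only [norm_smul, norm_inv, norm_norm]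
    exact inv_mul_cancel₀ (hypos k).ne'
  obtain ⟨zl, ψ, hψ, hweak⟩ := wsc z 1 (fun k => le_of_eq (hznorm k))
  have hynorm_tendsto : Tendsto (fun k => ‖y (ψ k)‖) atTop atTop := by
    apply tendsto_atTop_mono (fun k => (le_of_lt (lt_of_le_of_lt (Nat.cast_le.mpr (hψ.le_apply)) (hg (ψ k)))))
    exact tendsto_natCast_atTop_atTop
  have hEy : ∀ k, δ ≤ (1/2 : ℝ) * a (y k) (y k) - b u (y k) := fun k => hE (g k)
  by_cases hzl : zl = 0
  · -- limit zero: Pp part of z goes to 0, contradiction with positivity of a z z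
    have hvnorm : 0 < ‖Pp v‖ ^ 2 := pow_pos (norm_pos_iff.mpr hv) 2
    -- representation of z k
    have hrep : ∀ k, ∃ σ : ℝ, 0 ≤ σ ∧ Pp (z k) = σ • Pp v := by
      intro k
      obtain ⟨t, w, ht, hw, hxw⟩ := hxF (g k)
      refine ⟨t * (‖y k‖)⁻¹, mul_nonneg ht (inv_nonneg.mpr (hypos k).le), ?_⟩
      have hPpw : Pp w = 0 := by
        have h := hP_sum w
        rw [hw] at h
        have h2 : Pp w = w - w := eq_sub_of_add_eq h
        simpa using h2
      rw [hz]
      simp only [map_smul]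
      have : Pp (y k) = t • Pp v := by
        rw [hy]
        simp only [hxw, map_add, map_smul, hPpw, add_zero]
      rw [this, smul_smul, mul_comm t]
    choose σ hσ0 hσ using hrep
    have hinner : ∀ k, ⟪z k, Pp v⟫_ℝ = σ k * ‖Pp v‖ ^ 2 := by
      intro k
      have hd : z k = Pp (z k) + Pm (z k) := (hP_sum (z k)).symm
      rw [hd, inner_add_left, hσ k, real_inner_smul_left]
      have h1 : ⟪Pm (z k), Pp v⟫_ℝ = 0 := by
        have h2 : Pp v = Pp (Pp v) := (hPp_idem v).symm
        rw [h2, real_inner_comm, hP_orth]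
      have h3 : ⟪Pp v, Pp v⟫_ℝ = ‖Pp v‖ ^ 2 := real_inner_self_eq_norm_sq _
      rw [h1, h3]
      ring
    have hσtendsto : Tendsto (fun k => σ (ψ k)) atTop (𝓝 0) := by
      have h1 := hweak (Pp v)
      rw [hzl] at h1
      simp only [inner_zero_left] at h1
      have h2 : Tendsto (fun k => σ (ψ k) * ‖Pp v‖ ^ 2) atTop (𝓝 0) := by
        convert h1 using 2 with k
        rw [hinner]
      have := h2.div_const (‖Pp v‖ ^ 2)
      simpa [mul_div_assoc, div_self hvnorm.ne', zero_div] using this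
    have hPpz : Tendsto (fun k => ‖Pp (z (ψ k))‖ ^ 2) atTop (𝓝 0) := by
      have : ∀ k, ‖Pp (z (ψ k))‖ ^ 2 = (σ (ψ k)) ^ 2 * ‖Pp v‖ ^ 2 := by
        intro k
        rw [hσ, norm_smul, Real.norm_eq_abs, mul_pow, sq_abs]
      simp only [this]
      have := (hσtendsto.mul hσtendsto).mul_const (‖Pp v‖ ^ 2)
      simpa [pow_two, zero_mul] using this
    -- positivity of a z z
    have hazz : ∀ k, 0 < a (z k) (z k) := by
      intro k
      have hsc : a (y k) (y k) = ‖y k‖ ^ 2 * a (z k) (z k) := by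
        have : y k = ‖y k‖ • z k := by
          rw [hz, smul_smul, mul_inv_cancel₀ (hypos k).ne', one_smul]
        conv_lhs => rw [this]
        simp only [map_smul, ContinuousLinearMap.smul_apply, smul_eq_mul]
        ring
      have hb0 := hb_nonneg u (y k)
      have := hEy k
      nlinarith [sq_nonneg (‖y k‖)]
    -- contradiction: along ψ, ‖Pp z‖² → 0 but ‖Pm z‖² → 1
    have hcontra : ∀ k, ‖Pm (z (ψ k))‖ ^ 2 < ‖Pp (z (ψ k))‖ ^ 2 := by
      intro k
      have := hazz (ψ k)
      rw [haself] at this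
      linarith
    have hone : ∀ k, ‖Pp (z (ψ k))‖ ^ 2 + ‖Pm (z (ψ k))‖ ^ 2 = 1 := by
      intro k
      rw [← hnormsq, hznorm]
      norm_num
    obtain ⟨k, hk⟩ := (hPpz.eventually (gt_mem_nhds (by norm_num : (0:ℝ) < 1/4))).exists
    have := hcontra k
    have := hone k
    linarith
  · -- nonzero weak limit: superquadraticity contradiction
    have hsuper := hb_super u (fun k => z (ψ k)) zl hzl (fun y' => hweak y')
      (fun k => ‖y (ψ k)‖) hynorm_tendsto
    have heq : ∀ k, ‖y (ψ k)‖ • z (ψ k) = y (ψ k) := by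
      intro k
      rw [hz, smul_smul, mul_inv_cancel₀ (hypos (ψ k)).ne', one_smul]
    have hbound : ∀ k, b u (y (ψ k)) / ‖y (ψ k)‖ ^ 2 ≤ 1/2 := by
      intro k
      have h1 := hEy (ψ k)
      have h2 : a (y (ψ k)) (y (ψ k)) ≤ ‖y (ψ k)‖ ^ 2 := by
        rw [haself]
        have := hnormsq (y (ψ k))
        nlinarith [sq_nonneg (‖Pm (y (ψ k))‖)]
      rw [div_le_iff₀ (pow_pos (hypos (ψ k)) 2)]
      nlinarith
    simp only [heq] at hsuper
    obtain ⟨k, hk⟩ := (hsuper.eventually_gt_atTop (1/2)).exists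
    exact absurd (hbound k) (not_le.mpr hk)

set_option maxHeartbeats 2000000 in
theorem exists_max
    {W : Type*} [NormedAddCommGroup W] [InnerProductSpace ℝ W]
    {V : Type*} [NormedAddCommGroup V] [InnerProductSpace ℝ V] [CompleteSpace V]
    {N : Type*} [NormedAddCommGroup N] [InnerProductSpace ℝ N]
    (ι : V →L[ℝ] W)
    (Pp Pm : V →L[ℝ] V)
    (hP_sum : ∀ v : V, Pp v + Pm v = v)
    (hPp_idem : ∀ v : V, Pp (Pp v) = Pp v)
    (hPm_idem : ∀ v : V, Pm (Pm v) = Pm v)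
    (hP_orth : ∀ v w : V, ⟪Pp v, Pm w⟫_ℝ = 0)
    (a : V →L[ℝ] V →L[ℝ] ℝ)
    (ha : ∀ v w : V, a v w = ⟪Pp v, Pp w⟫_ℝ - ⟪Pm v, Pm w⟫_ℝ)
    (b : N → V → ℝ) (f : N → ℝ → ℝ)
    (hb_nonneg : ∀ (u : N) (v : V), 0 ≤ b u v)
    (hf_cont : ContinuousOn (fun q : N × ℝ => f q.1 q.2) (Set.univ ×ˢ Set.Ici (0:ℝ)))
    (hf_zero : ∀ u : N, f u 0 = 0)
    (hrepr : ∀ (u : N) (y : V), b u y = ∫ τ in (0:ℝ)..‖ι y‖, f u τ * τ)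
    (hgap : ∀ (u : N) {r₁ r₂ : ℝ}, 0 ≤ r₁ → 0 ≤ r₂ → r₁ ≠ r₂ →
      f u r₁ * ((r₂ ^ 2 - r₁ ^ 2) / 2) + (∫ τ in (0:ℝ)..r₁, f u τ * τ)
        < ∫ τ in (0:ℝ)..r₂, f u τ * τ)
    (hb_wcont : ∀ (u : N) (vseq : ℕ → V) (v : V),
      (∀ y : V, Tendsto (fun n => ⟪vseq n, y⟫_ℝ) atTop (𝓝 ⟪v, y⟫_ℝ)) →
      Tendsto (fun n => b u (vseq n)) atTop (𝓝 (b u v)))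
    (hb_super : ∀ (u : N) (vseq : ℕ → V) (v : V), v ≠ 0 →
      (∀ y : V, Tendsto (fun n => ⟪vseq n, y⟫_ℝ) atTop (𝓝 ⟪v, y⟫_ℝ)) →
      ∀ s : ℕ → ℝ, Tendsto s atTop atTop →
      Tendsto (fun n => b u (s n • vseq n) / (s n) ^ 2) atTop atTop)
    (u : N) (v : V) (hv : Pp v ≠ 0) :
    ∃ x₀ : V, (∃ (t : ℝ) (w : V), 0 ≤ t ∧ Pm w = w ∧ x₀ = t • v + w) ∧ Pp x₀ ≠ 0 ∧
      ∀ y : V, (∃ (t : ℝ) (w : V), 0 ≤ t ∧ Pm w = w ∧ y = t • v + w) →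
        (1/2 : ℝ) * a y y - b u y ≤ (1/2 : ℝ) * a x₀ x₀ - b u x₀ := by
  classical
  set E : V → ℝ := fun x => (1/2 : ℝ) * a x x - b u x with hEdef
  set F : Set V := {x | ∃ (t : ℝ) (w : V), 0 ≤ t ∧ Pm w = w ∧ x = t • v + w} with hFdef
  -- basic facts
  have hPp_of_Pm : ∀ w : V, Pm w = w → Pp w = 0 := by
    intro w hw
    have h := hP_sum w
    rw [hw] at h
    have h2 : Pp w = w - w := eq_sub_of_add_eq h
    simpa using h2
  have hPm_of_Pp : ∀ w : V, Pp w = w → Pm w = 0 := by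
    intro w hw
    have h := hP_sum w
    rw [hw] at h
    have h2 : w + Pm w = w + 0 := by rw [h, add_zero]
    exact add_left_cancel h2
  have hPmPp : ∀ z : V, Pm (Pp z) = 0 := fun z => hPm_of_Pp _ (hPp_idem z)
  have hPpPm : ∀ z : V, Pp (Pm z) = 0 := by
    intro z
    apply hPp_of_Pm
    exact hPm_idem z
  have hnormsq : ∀ z : V, ‖z‖ ^ 2 = ‖Pp z‖ ^ 2 + ‖Pm z‖ ^ 2 := by
    intro z
    calc ‖z‖ ^ 2 = ‖Pp z + Pm z‖ ^ 2 := by rw [hP_sum]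
      _ = ‖Pp z‖ ^ 2 + 2 * ⟪Pp z, Pm z⟫_ℝ + ‖Pm z‖ ^ 2 := norm_add_sq_real _ _
      _ = ‖Pp z‖ ^ 2 + ‖Pm z‖ ^ 2 := by rw [hP_orth]; ring
  have haself : ∀ z : V, a z z = ‖Pp z‖ ^ 2 - ‖Pm z‖ ^ 2 := by
    intro z
    rw [ha, real_inner_self_eq_norm_sq, real_inner_self_eq_norm_sq]
  have hPp_sa : ∀ z y : V, ⟪Pp z, y⟫_ℝ = ⟪z, Pp y⟫_ℝ := by
    intro z y
    have h1 : ⟪Pp z, y⟫_ℝ = ⟪Pp z, Pp y⟫_ℝ + ⟪Pp z, Pm y⟫_ℝ := by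
      rw [← inner_add_right, hP_sum]
    have h2 : ⟪z, Pp y⟫_ℝ = ⟪Pp z, Pp y⟫_ℝ + ⟪Pm z, Pp y⟫_ℝ := by
      rw [← inner_add_left, hP_sum]
    have h3 : ⟪Pm z, Pp y⟫_ℝ = 0 := by
      rw [real_inner_comm]
      have := hP_orth (Pp y) z
      rwa [hPp_idem] at this
    rw [h1, h2, h3, hP_orth]
  have hPm_sa : ∀ z y : V, ⟪Pm z, y⟫_ℝ = ⟪z, Pm y⟫_ℝ := by
    intro z y
    have h1 : ⟪Pm z, y⟫_ℝ = ⟪Pm z, Pp y⟫_ℝ + ⟪Pm z, Pm y⟫_ℝ := by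
      rw [← inner_add_right, hP_sum]
    have h2 : ⟪z, Pm y⟫_ℝ = ⟪Pp z, Pm y⟫_ℝ + ⟪Pm z, Pm y⟫_ℝ := by
      rw [← inner_add_left, hP_sum]
    have h3 : ⟪Pm z, Pp y⟫_ℝ = 0 := by
      rw [real_inner_comm]
      have := hP_orth (Pp y) z
      rwa [hPp_idem] at this
    rw [h1, h2, h3, hP_orth]
  have hPpF : ∀ (t : ℝ) (w : V), Pm w = w → Pp (t • v + w) = t • Pp v := by
    intro t w hw
    rw [map_add, map_smul, hPp_of_Pm w hw, add_zero]
  have hinnerF : ∀ (t : ℝ) (w : V), Pm w = w → ⟪t • v + w, Pp v⟫_ℝ = t * ‖Pp v‖ ^ 2 := by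
    intro t w hw
    rw [inner_add_left, real_inner_smul_left]
    have h1 : ⟪w, Pp v⟫_ℝ = 0 := by
      rw [← hw, real_inner_comm]
      exact hP_orth v w
    have h2 : ⟪v, Pp v⟫_ℝ = ‖Pp v‖ ^ 2 := by
      rw [← hPp_sa v v]
      have h4 : ⟪Pp v, v⟫_ℝ = ⟪Pp v, Pp v⟫_ℝ + ⟪Pp v, Pm v⟫_ℝ := by
        rw [← inner_add_right, hP_sum]
      rw [h4, hP_orth, add_zero, real_inner_self_eq_norm_sq]
    rw [h1, h2, add_zero]
  -- Step 1: an element of F with positive energy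
  have hstep1 : ∃ xp, xp ∈ F ∧ 0 < E xp := by
    have hmemF : ∀ t : ℝ, 0 ≤ t → t • Pp v ∈ F := by
      intro t ht
      refine ⟨t, -(t • Pm v), ht, ?_, ?_⟩
      · rw [map_neg, map_smul, hPm_idem]
      · have h1 : t • v = t • Pp v + t • Pm v := by rw [← smul_add, hP_sum]
        rw [h1]; abel
    have hEval : ∀ t : ℝ, 0 ≤ t → E (t • Pp v)
        = t ^ 2 / 2 * ‖Pp v‖ ^ 2 - ∫ τ in (0:ℝ)..(t * ‖ι (Pp v)‖), f u τ * τ := by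
      intro t ht
      have ha2 : a (t • Pp v) (t • Pp v) = t ^ 2 * ‖Pp v‖ ^ 2 := by
        simp only [map_smul, ContinuousLinearMap.smul_apply, smul_eq_mul]
        rw [haself, hPp_idem, hPmPp]
        simp only [norm_zero]
        ring
      have hb2 : b u (t • Pp v) = ∫ τ in (0:ℝ)..(t * ‖ι (Pp v)‖), f u τ * τ := by
        rw [hrepr, map_smul, norm_smul, Real.norm_eq_abs, abs_of_nonneg ht]
      rw [hEdef]
      simp only []
      rw [ha2, hb2]
      ring
    rcases eq_or_lt_of_le (norm_nonneg (ι (Pp v))) with hr0 | hrpos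
    · refine ⟨(1:ℝ) • Pp v, hmemF 1 zero_le_one, ?_⟩
      rw [hEval 1 zero_le_one, ← hr0, mul_zero, intervalIntegral.integral_same]
      have : (0:ℝ) < ‖Pp v‖ ^ 2 := pow_pos (norm_pos_iff.mpr hv) 2
      nlinarith
    · set r := ‖ι (Pp v)‖ with hrdef
      have hfc : ContinuousOn (fun τ : ℝ => f u τ) (Set.Ici (0:ℝ)) := by
        have : ContinuousOn (fun τ : ℝ => (fun q : N × ℝ => f q.1 q.2) (u, τ)) (Set.Ici 0) := by
          apply hf_cont.comp (Continuous.continuousOn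
            (continuous_const.prodMk continuous_id))
          intro τ hτ
          exact ⟨Set.mem_univ _, hτ⟩
        exact this
      have h0 : Tendsto (fun t : ℝ => f u (t * r)) (𝓝[>] 0) (𝓝 0) := by
        have h1 : Tendsto (fun t : ℝ => t * r) (𝓝[>] (0:ℝ)) (𝓝[Set.Ici 0] 0) := by
          apply tendsto_nhdsWithin_of_tendsto_nhds_of_eventually_within
          · have h9 := (continuous_mul_right r).tendsto (0:ℝ)
            rw [zero_mul] at h9
            exact h9.mono_left nhdsWithin_le_nhds
          · filter_upwards [self_mem_nhdsWithin] with t ht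
            exact mul_nonneg (le_of_lt ht) (norm_nonneg _)
        have h2 : ContinuousWithinAt (fun τ : ℝ => f u τ) (Set.Ici 0) 0 :=
          hfc 0 (Set.self_mem_Ici)
        have h3 := h2.tendsto
        rw [hf_zero] at h3
        exact h3.comp h1
      have hPv2 : (0:ℝ) < ‖Pp v‖ ^ 2 := pow_pos (norm_pos_iff.mpr hv) 2
      have hev : ∀ᶠ t in 𝓝[>] (0:ℝ), f u (t * r) < ‖Pp v‖ ^ 2 / r ^ 2 :=
        h0.eventually_lt_const (by positivity)
      obtain ⟨t, ht1, ht2⟩ := (hev.and self_mem_nhdsWithin).exists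
      have ht2' : (0:ℝ) < t := ht2
      refine ⟨t • Pp v, hmemF t ht2'.le, ?_⟩
      rw [hEval t ht2'.le]
      have htr : (0:ℝ) < t * r := mul_pos ht2' hrpos
      have hgap2 := hgap u (le_of_lt htr) (le_refl (0:ℝ)) (ne_of_gt htr)
      rw [intervalIntegral.integral_same] at hgap2
      -- hgap2 : f u (t*r) * ((0^2 - (t*r)^2)/2) + ∫ 0..(t*r) < 0
      have hf2 : f u (t * r) * r ^ 2 < ‖Pp v‖ ^ 2 := by
        rw [← lt_div_iff₀ (by positivity : (0:ℝ) < r ^ 2)]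
        exact ht1
      nlinarith [sq_nonneg t, mul_pos ht2' ht2']
  obtain ⟨xp, hxpF, hδpos⟩ := hstep1
  set δ := E xp with hδdef
  set S : Set ℝ := E '' F with hSdef
  have hSne : S.Nonempty := ⟨δ, xp, hxpF, rfl⟩
  have hbdd : BddAbove S := by
    by_contra hb
    rw [not_bddAbove_iff] at hb
    have hsel : ∀ n : ℕ, ∃ y : V, y ∈ F ∧ (n : ℝ) + δ < E y := by
      intro n
      obtain ⟨rr, ⟨y, hyF, rfl⟩, hr⟩ := hb ((n : ℝ) + δ)
      exact ⟨y, hyF, hr⟩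
    choose yseq hyF hyE using hsel
    have hyδ : ∀ n, δ ≤ E (yseq n) := fun n =>
      le_of_lt (lt_of_le_of_lt (le_add_of_nonneg_left (Nat.cast_nonneg n)) (hyE n))
    obtain ⟨C, hC⟩ := bounded_of_E_ge ι Pp Pm hP_sum hPp_idem hPm_idem hP_orth a ha b f
      hb_nonneg hb_super u v hv yseq (fun n => hyF n) δ hδpos hyδ
    have hC0 : 0 ≤ C := le_trans (norm_nonneg _) (hC 0)
    have hupper : ∀ n, E (yseq n) ≤ (‖Pp‖ * C) ^ 2 / 2 := by
      intro n
      have h1 : ‖Pp (yseq n)‖ ≤ ‖Pp‖ * C :=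
        le_trans (Pp.le_opNorm _) (mul_le_mul_of_nonneg_left (hC n) (norm_nonneg _))
      have h2 : a (yseq n) (yseq n) ≤ (‖Pp‖ * C) ^ 2 := by
        rw [haself]
        nlinarith [sq_nonneg (‖Pm (yseq n)‖), norm_nonneg (Pp (yseq n))]
      have h3 := hb_nonneg u (yseq n)
      rw [hEdef]
      simp only []
      linarith
    obtain ⟨K, hK⟩ : ∃ K : ℝ, ∀ n, E (yseq n) ≤ K := ⟨(‖Pp‖ * C) ^ 2 / 2, hupper⟩
    have h4 := hyE ⌈K⌉₊
    have h5 := hK ⌈K⌉₊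
    have hn : K ≤ (⌈K⌉₊ : ℝ) := Nat.le_ceil K
    linarith only [h4, h5, hn, hδpos]
  set M := sSup S with hMdef
  have hδM : δ ≤ M := le_csSup hbdd ⟨xp, hxpF, rfl⟩
  have hsel2 : ∀ n : ℕ, ∃ y : V, y ∈ F ∧ M - δ / ((n:ℝ) + 2) < E y := by
    intro n
    have h1 : M - δ / ((n:ℝ) + 2) < M := by
      have : 0 < δ / ((n:ℝ) + 2) := by positivity
      linarith
    obtain ⟨rr, hrS, hr⟩ := exists_lt_of_lt_csSup hSne h1
    obtain ⟨y, hyF, rfl⟩ := hrS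
    exact ⟨y, hyF, hr⟩
  choose x hxF hxE using hsel2
  have hxEle : ∀ n, E (x n) ≤ M := fun n => le_csSup hbdd ⟨x n, hxF n, rfl⟩
  have hxδ2 : ∀ n, δ / 2 ≤ E (x n) := by
    intro n
    have h2 : δ / ((n:ℝ) + 2) ≤ δ / 2 := by
      apply div_le_div_of_nonneg_left hδpos.le (by norm_num)
      · have : (0:ℝ) ≤ (n:ℝ) := Nat.cast_nonneg n
        linarith
    clear_value δ M
    obtain ⟨A, hA1, hA2⟩ : ∃ A : ℝ, A ≤ δ / 2 ∧ M - A < E (x n) :=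
      ⟨δ / ((n:ℝ) + 2), h2, hxE n⟩
    have hh : δ / 2 ≤ M - A := by linarith only [hA1, hδM]
    exact hh.trans hA2.le
  have hxEtendsto : Tendsto (fun n => E (x n)) atTop (𝓝 M) := by
    apply tendsto_of_tendsto_of_tendsto_of_le_of_le
      (g := fun n : ℕ => M - δ / ((n:ℝ) + 2)) (h := fun _ : ℕ => M)
    · have h6 : Tendsto (fun n : ℕ => δ / ((n:ℝ) + 2)) atTop (𝓝 0) := by
        apply Tendsto.div_atTop (tendsto_const_nhds)
        exact tendsto_atTop_add_const_right atTop 2 tendsto_natCast_atTop_atTop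
      have h7 := (tendsto_const_nhds :
        Tendsto (fun _ : ℕ => M) atTop (𝓝 M)).sub h6
      simpa using h7
    · exact tendsto_const_nhds
    · exact fun n => (hxE n).le
    · exact hxEle
  obtain ⟨C, hC⟩ := bounded_of_E_ge ι Pp Pm hP_sum hPp_idem hPm_idem hP_orth a ha b f
    hb_nonneg hb_super u v hv x hxF (δ/2) (half_pos hδpos) hxδ2
  obtain ⟨x₀, ψ, hψ, hweak⟩ := wsc x C hC
  set X : ℕ → V := fun k => x (ψ k) with hX
  have hweakX : ∀ y : V, Tendsto (fun k => ⟪X k, y⟫_ℝ) atTop (𝓝 ⟪x₀, y⟫_ℝ) := hweak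
  have hXE : Tendsto (fun k => E (X k)) atTop (𝓝 M) := hxEtendsto.comp hψ.tendsto_atTop
  choose tseq wseq htpos hwseq hxrep using hxF
  have hinnerX : ∀ k, ⟪X k, Pp v⟫_ℝ = tseq (ψ k) * ‖Pp v‖ ^ 2 := by
    intro k
    rw [hX]
    simp only []
    rw [hxrep (ψ k)]
    exact hinnerF _ _ (hwseq (ψ k))
  have hPv2 : (0:ℝ) < ‖Pp v‖ ^ 2 := pow_pos (norm_pos_iff.mpr hv) 2
  set t₀ : ℝ := ⟪x₀, Pp v⟫_ℝ / ‖Pp v‖ ^ 2 with ht₀def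
  have htconv : Tendsto (fun k => tseq (ψ k)) atTop (𝓝 t₀) := by
    have h1 := (hweakX (Pp v)).div_const (‖Pp v‖ ^ 2)
    rw [ht₀def]
    convert h1 using 2 with k
    rw [hinnerX k, mul_div_assoc, div_self hPv2.ne', mul_one]
  have ht₀0 : 0 ≤ t₀ :=
    ge_of_tendsto htconv (Eventually.of_forall fun k => htpos (ψ k))
  have hPpx₀ : Pp x₀ = t₀ • Pp v := by
    have hz : ∀ y : V, ⟪Pp x₀ - t₀ • Pp v, y⟫_ℝ = 0 := by
      intro y
      have e1 : Tendsto (fun k => ⟪Pp (X k), y⟫_ℝ) atTop (𝓝 ⟪Pp x₀, y⟫_ℝ) := by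
        have h1 := hweakX (Pp y)
        have h2 : ∀ k, ⟪X k, Pp y⟫_ℝ = ⟪Pp (X k), y⟫_ℝ := fun k => (hPp_sa (X k) y).symm
        have h3 : ⟪x₀, Pp y⟫_ℝ = ⟪Pp x₀, y⟫_ℝ := (hPp_sa x₀ y).symm
        rw [h3] at h1
        exact h1.congr (fun k => h2 k)
      have e2 : ∀ k, ⟪Pp (X k), y⟫_ℝ = tseq (ψ k) * ⟪Pp v, y⟫_ℝ := by
        intro k
        rw [hX]
        simp only []
        rw [hxrep (ψ k), hPpF _ _ (hwseq (ψ k)), real_inner_smul_left]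
      have e3 : Tendsto (fun k => tseq (ψ k) * ⟪Pp v, y⟫_ℝ) atTop (𝓝 (t₀ * ⟪Pp v, y⟫_ℝ)) :=
        htconv.mul_const _
      have e4 : ⟪Pp x₀, y⟫_ℝ = t₀ * ⟪Pp v, y⟫_ℝ :=
        tendsto_nhds_unique (e1.congr (fun k => e2 k)) e3
      rw [inner_sub_left, real_inner_smul_left, e4]
      ring
    have h5 := hz (Pp x₀ - t₀ • Pp v)
    rw [inner_self_eq_zero] at h5
    exact sub_eq_zero.mp h5
  set w₀ : V := x₀ - t₀ • v with hw₀def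
  have hPmw₀ : Pm w₀ = w₀ := by
    have hPpw₀ : Pp w₀ = 0 := by
      rw [hw₀def, map_sub, map_smul, hPpx₀, sub_self]
    have h6 := hP_sum w₀
    rw [hPpw₀, zero_add] at h6
    exact h6
  have hx₀F : x₀ ∈ F := ⟨t₀, w₀, ht₀0, hPmw₀, by rw [hw₀def]; abel⟩
  have hPpX2 : Tendsto (fun k => ‖Pp (X k)‖ ^ 2) atTop (𝓝 (‖Pp x₀‖ ^ 2)) := by
    have e2 : ∀ k, ‖Pp (X k)‖ ^ 2 = (tseq (ψ k)) ^ 2 * ‖Pp v‖ ^ 2 := by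
      intro k
      rw [hX]
      simp only []
      rw [hxrep (ψ k), hPpF _ _ (hwseq (ψ k)), norm_smul, Real.norm_eq_abs, mul_pow, sq_abs]
    have e4 : ‖Pp x₀‖ ^ 2 = t₀ ^ 2 * ‖Pp v‖ ^ 2 := by
      rw [hPpx₀, norm_smul, Real.norm_eq_abs, mul_pow, sq_abs]
    rw [e4]
    have h8 : Tendsto (fun k => (tseq (ψ k)) ^ 2 * ‖Pp v‖ ^ 2) atTop (𝓝 (t₀ ^ 2 * ‖Pp v‖ ^ 2)) := by
      exact ((htconv.pow 2).mul_const _)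
    exact h8.congr (fun k => (e2 k).symm)
  have hbX : Tendsto (fun k => b u (X k)) atTop (𝓝 (b u x₀)) := hb_wcont u X x₀ hweakX
  set L2 : ℝ := ‖Pp x₀‖ ^ 2 - 2 * b u x₀ - 2 * M with hL2def
  have hPmX2 : Tendsto (fun k => ‖Pm (X k)‖ ^ 2) atTop (𝓝 L2) := by
    have e : ∀ k, ‖Pm (X k)‖ ^ 2 = ‖Pp (X k)‖ ^ 2 - 2 * b u (X k) - 2 * E (X k) := by
      intro k
      rw [hEdef]
      simp only []
      rw [haself]
      ring
    have h9 : Tendsto (fun k => ‖Pp (X k)‖ ^ 2 - 2 * b u (X k) - 2 * E (X k)) atTop (𝓝 L2) := by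
      rw [hL2def]
      exact (hPpX2.sub (hbX.const_mul 2)).sub (hXE.const_mul 2)
    exact h9.congr (fun k => (e k).symm)
  have hL2nonneg : 0 ≤ L2 := ge_of_tendsto hPmX2 (Eventually.of_forall fun k => sq_nonneg _)
  have hlsc : ‖Pm x₀‖ ^ 2 ≤ L2 := by
    have e1 : ∀ k, ⟪Pm (X k), Pm x₀⟫_ℝ * ⟪Pm (X k), Pm x₀⟫_ℝ ≤ ‖Pm (X k)‖ ^ 2 * ‖Pm x₀‖ ^ 2 := by
      intro k
      have h10 := real_inner_mul_inner_self_le (Pm (X k)) (Pm x₀)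
      rwa [real_inner_self_eq_norm_sq, real_inner_self_eq_norm_sq] at h10
    have e2 : Tendsto (fun k => ⟪Pm (X k), Pm x₀⟫_ℝ) atTop (𝓝 (‖Pm x₀‖ ^ 2)) := by
      have h1 := hweakX (Pm x₀)
      have h2 : ∀ k, ⟪X k, Pm x₀⟫_ℝ = ⟪Pm (X k), Pm x₀⟫_ℝ := by
        intro k
        rw [hPm_sa (X k) (Pm x₀), hPm_idem]
      have h3 : ⟪x₀, Pm x₀⟫_ℝ = ‖Pm x₀‖ ^ 2 := by
        have h4 := hPm_sa x₀ (Pm x₀)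
        rw [hPm_idem] at h4
        rw [← h4, real_inner_self_eq_norm_sq]
      rw [h3] at h1
      exact h1.congr (fun k => h2 k)
    have hlim : (‖Pm x₀‖ ^ 2) * (‖Pm x₀‖ ^ 2) ≤ L2 * ‖Pm x₀‖ ^ 2 :=
      le_of_tendsto_of_tendsto' (e2.mul e2) (hPmX2.mul_const _) e1
    rcases (sq_nonneg ‖Pm x₀‖).eq_or_lt with h0 | hpos
    · rw [← h0]; exact hL2nonneg
    · nlinarith
  have hEx₀ : M ≤ E x₀ := by
    have e : E x₀ = (1/2 : ℝ) * (‖Pp x₀‖ ^ 2 - ‖Pm x₀‖ ^ 2) - b u x₀ := by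
      rw [hEdef]
      simp only []
      rw [haself]
    rw [e]
    rw [hL2def] at hlsc
    linarith [hlsc]
  have hPpx₀ne : Pp x₀ ≠ 0 := by
    intro h0
    have e : E x₀ = (1/2 : ℝ) * (‖Pp x₀‖ ^ 2 - ‖Pm x₀‖ ^ 2) - b u x₀ := by
      rw [hEdef]
      simp only []
      rw [haself]
    have h8 : E x₀ ≤ 0 := by
      rw [e, h0]
      simp only [norm_zero]
      nlinarith [hb_nonneg u x₀, sq_nonneg (‖Pm x₀‖)]
    linarith [hδpos, hδM, hEx₀]
  exact ⟨x₀, hx₀F, hPpx₀ne, fun y hy => le_trans (le_csSup hbdd ⟨y, hy, rfl⟩) hEx₀⟩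

set_option maxHeartbeats 1000000 in
theorem stmt_8
    {W : Type*} [NormedAddCommGroup W] [InnerProductSpace ℝ W] [CompleteSpace W]
    {V : Type*} [NormedAddCommGroup V] [InnerProductSpace ℝ V] [CompleteSpace V]
    (ι : V →L[ℝ] W) (hι : Function.Injective ι)
    (c : ℝ) (hc : 0 < c) (hιc : ∀ v : V, ‖ι v‖ ≤ c * ‖v‖)
    (Pp Pm : V →L[ℝ] V)
    (hP_sum : ∀ v : V, Pp v + Pm v = v)
    (hPp_idem : ∀ v : V, Pp (Pp v) = Pp v)
    (hPm_idem : ∀ v : V, Pm (Pm v) = Pm v)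
    (hP_orth : ∀ v w : V, ⟪Pp v, Pm w⟫_ℝ = 0)
    (a : V →L[ℝ] V →L[ℝ] ℝ)
    (ha : ∀ v w : V, a v w = ⟪Pp v, Pp w⟫_ℝ - ⟪Pm v, Pm w⟫_ℝ)
    {N : Type*} [NormedAddCommGroup N] [InnerProductSpace ℝ N] [CompleteSpace N]
    (p : ℝ) (hp : 1 < p)
    (b : N → V → ℝ) (f : N → ℝ → ℝ)
    (hb_C2 : ContDiff ℝ 2 (fun q : N × V => b q.1 q.2))
    (hb_zero : ∀ u : N, b u 0 = 0)
    (hb_nonneg : ∀ (u : N) (v : V), 0 ≤ b u v)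
    (hf_cont : ContinuousOn (fun q : N × ℝ => f q.1 q.2) (Set.univ ×ˢ Set.Ici (0:ℝ)))
    (hf_zero : ∀ u : N, f u 0 = 0)
    (hf_mono : ∀ u : N, StrictMonoOn (f u) (Set.Ici (0:ℝ)))
    (hf_nonneg : ∀ (u : N) (t : ℝ), 0 ≤ t → 0 ≤ f u t)
    (hgrad : ∀ (u : N) (v h : V), fderiv ℝ (b u) v h = f u ‖ι v‖ * ⟪ι v, ι h⟫_ℝ)
    (hb_wcont : ∀ (u : N) (vseq : ℕ → V) (v : V),
      (∀ y : V, Tendsto (fun n => ⟪vseq n, y⟫_ℝ) atTop (𝓝 ⟪v, y⟫_ℝ)) →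
      Tendsto (fun n => b u (vseq n)) atTop (𝓝 (b u v)))
    (hb_super : ∀ (u : N) (vseq : ℕ → V) (v : V), v ≠ 0 →
      (∀ y : V, Tendsto (fun n => ⟪vseq n, y⟫_ℝ) atTop (𝓝 ⟪v, y⟫_ℝ)) →
      ∀ s : ℕ → ℝ, Tendsto s atTop atTop →
      Tendsto (fun n => b u (s n • vseq n) / (s n) ^ 2) atTop atTop)
    :
    ∀ (u : N) (v : V), Pp v ≠ 0 →
      ∃ v₀ : V,
        (∃ (t : ℝ) (w : V), 0 ≤ t ∧ Pm w = w ∧ v₀ = t • v + w) ∧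
        (Pp v₀ ≠ 0 ∧ a v₀ v₀ = f u ‖ι v₀‖ * ⟪ι v₀, ι v₀⟫_ℝ ∧
          ∀ φ : V, Pm φ = φ → a v₀ φ = f u ‖ι v₀‖ * ⟪ι v₀, ι φ⟫_ℝ) ∧
        (∀ x : V, (∃ (t : ℝ) (w : V), 0 ≤ t ∧ Pm w = w ∧ x = t • v + w) →
          (Pp x ≠ 0 ∧ a x x = f u ‖ι x‖ * ⟪ι x, ι x⟫_ℝ ∧
            ∀ φ : V, Pm φ = φ → a x φ = f u ‖ι x‖ * ⟪ι x, ι φ⟫_ℝ) → x = v₀) ∧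
        (∀ x : V, (∃ (t : ℝ) (w : V), 0 ≤ t ∧ Pm w = w ∧ x = t • v + w) → x ≠ v₀ →
          (1/2 : ℝ) * a x x - b u x < (1/2 : ℝ) * a v₀ v₀ - b u v₀) := by
  intro u v hv
  have hrepr : ∀ (u : N) (y : V), b u y = ∫ τ in (0:ℝ)..‖ι y‖, f u τ * τ :=
    b_repr ι b f hb_C2 hb_zero hf_cont hgrad
  have hgap : ∀ (u : N) {r₁ r₂ : ℝ}, 0 ≤ r₁ → 0 ≤ r₂ → r₁ ≠ r₂ →
      f u r₁ * ((r₂ ^ 2 - r₁ ^ 2) / 2) + (∫ τ in (0:ℝ)..r₁, f u τ * τ)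
        < ∫ τ in (0:ℝ)..r₂, f u τ * τ :=
    fun u => J_gap f hf_cont hf_mono hf_nonneg u
  obtain ⟨x₀, hx₀F, hPpx₀, hmax⟩ := exists_max ι Pp Pm hP_sum hPp_idem hPm_idem hP_orth
    a ha b f hb_nonneg hf_cont hf_zero hrepr hgap hb_wcont hb_super u v hv
  -- basic projection facts
  have hPp_of_Pm : ∀ w : V, Pm w = w → Pp w = 0 := by
    intro w hw
    have h := hP_sum w
    rw [hw] at h
    have h2 : Pp w = w - w := eq_sub_of_add_eq h
    simpa using h2
  have hPpF : ∀ (t : ℝ) (w : V), Pm w = w → Pp (t • v + w) = t • Pp v := by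
    intro t w hw
    rw [map_add, map_smul, hPp_of_Pm w hw, add_zero]
  obtain ⟨t₀, w₀, ht₀, hw₀, hx₀eq⟩ := hx₀F
  have hPpx₀eq : Pp x₀ = t₀ • Pp v := by rw [hx₀eq]; exact hPpF t₀ w₀ hw₀
  have ht₀pos : 0 < t₀ := by
    rcases ht₀.eq_or_lt with h | h
    · exfalso
      apply hPpx₀
      rw [hPpx₀eq, ← h, zero_smul]
    · exact h
  -- differentiability of b u
  have hbu : ContDiff ℝ 2 (b u) := hb_C2.comp (contDiff_const.prodMk contDiff_id)
  have hbu_diff : ∀ z : V, HasFDerivAt (b u) (fderiv ℝ (b u) z) z := fun z =>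
    ((hbu.differentiable (by norm_num)) z).hasFDerivAt
  -- derivative of the energy along a line
  have hEderiv : ∀ h : V, HasDerivAt
      (fun s : ℝ => (1/2 : ℝ) * a (x₀ + s • h) (x₀ + s • h) - b u (x₀ + s • h))
      (a x₀ h - f u ‖ι x₀‖ * ⟪ι x₀, ι h⟫_ℝ) 0 := by
    intro h
    have hA : ∀ s : ℝ, (1/2 : ℝ) * a (x₀ + s • h) (x₀ + s • h)
        = (1/2 : ℝ) * a x₀ x₀ + s * a x₀ h + s ^ 2 * ((1/2 : ℝ) * a h h) := by
      intro s
      have hsymm : a h x₀ = a x₀ h := by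
        rw [ha, ha, real_inner_comm (Pp h), real_inner_comm (Pm h)]
      simp only [map_add, map_smul, ContinuousLinearMap.add_apply,
        ContinuousLinearMap.smul_apply, smul_eq_mul]
      rw [hsymm]
      ring
    have hpart1 : HasDerivAt (fun s : ℝ => (1/2 : ℝ) * a (x₀ + s • h) (x₀ + s • h))
        (a x₀ h) 0 := by
      have h1 : HasDerivAt (fun s : ℝ => s * a x₀ h) (a x₀ h) 0 := by
        simpa using (hasDerivAt_id (0:ℝ)).mul_const (a x₀ h)
      have h2 : HasDerivAt (fun s : ℝ => s ^ 2 * ((1/2 : ℝ) * a h h)) 0 0 := by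
        have := (hasDerivAt_pow 2 (0:ℝ)).mul_const ((1/2 : ℝ) * a h h)
        simpa using this
      have h3 := ((h1.add h2).const_add ((1/2 : ℝ) * a x₀ x₀))
      have hfun : (fun s : ℝ => (1/2 : ℝ) * a (x₀ + s • h) (x₀ + s • h))
          = (fun s : ℝ => (1/2 : ℝ) * a x₀ x₀
            + (s * a x₀ h + s ^ 2 * ((1/2 : ℝ) * a h h))) := by
        funext s
        rw [hA s]
        ring
      rw [hfun]
      simpa using h3
    have hline : HasDerivAt (fun s : ℝ => x₀ + s • h) h 0 := by
      simpa using ((hasDerivAt_id (0:ℝ)).smul_const h).const_add x₀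
    have hpart2 : HasDerivAt (fun s : ℝ => b u (x₀ + s • h))
        (f u ‖ι x₀‖ * ⟪ι x₀, ι h⟫_ℝ) 0 := by
      have hcomp := (hbu_diff (x₀ + (0:ℝ) • h)).comp_hasDerivAt 0 hline
      have he : x₀ + (0:ℝ) • h = x₀ := by simp
      rw [he] at hcomp
      rw [hgrad] at hcomp
      exact hcomp
    exact hpart1.sub hpart2
  -- Euler-Lagrange equations
  have hEL : ∀ h : V, (∀ s : ℝ, ∃ (t : ℝ) (w : V), 0 ≤ t ∧ Pm w = w ∧
      x₀ + s • h = t • v + w) → a x₀ h = f u ‖ι x₀‖ * ⟪ι x₀, ι h⟫_ℝ := by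
    intro h hmem
    have hloc : IsLocalMax (fun s : ℝ =>
        (1/2 : ℝ) * a (x₀ + s • h) (x₀ + s • h) - b u (x₀ + s • h)) 0 := by
      apply Eventually.of_forall
      intro s
      have := hmax (x₀ + s • h) (hmem s)
      simpa using this
    have := hloc.hasDerivAt_eq_zero (hEderiv h)
    linarith [this]
  have hELm : ∀ h : V, Pm h = h → a x₀ h = f u ‖ι x₀‖ * ⟪ι x₀, ι h⟫_ℝ := by
    intro h hh
    apply hEL
    intro s
    refine ⟨t₀, w₀ + s • h, ht₀, ?_, ?_⟩
    · rw [map_add, map_smul, hw₀, hh]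
    · rw [hx₀eq]; abel
  have hELv : a x₀ v = f u ‖ι x₀‖ * ⟪ι x₀, ι v⟫_ℝ := by
    -- local max in the v direction
    have hloc : IsLocalMax (fun s : ℝ =>
        (1/2 : ℝ) * a (x₀ + s • v) (x₀ + s • v) - b u (x₀ + s • v)) 0 := by
      filter_upwards [Metric.ball_mem_nhds (0:ℝ) ht₀pos] with s hs
      have hs' : |s| < t₀ := by
        rw [Metric.mem_ball, Real.dist_eq, sub_zero] at hs
        exact hs
      have hmem : ∃ (t : ℝ) (w : V), 0 ≤ t ∧ Pm w = w ∧ x₀ + s • v = t • v + w := by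
        refine ⟨t₀ + s, w₀, ?_, hw₀, ?_⟩
        · have := abs_le.mp hs'.le
          linarith [this.1]
        · rw [hx₀eq, add_smul]; abel
      have := hmax (x₀ + s • v) hmem
      simpa using this
    have := hloc.hasDerivAt_eq_zero (hEderiv v)
    linarith [this]
  have hN1 : a x₀ x₀ = f u ‖ι x₀‖ * ⟪ι x₀, ι x₀⟫_ℝ := by
    have e0 : a x₀ x₀ = a x₀ (t₀ • v + w₀) := by rw [← hx₀eq]
    rw [map_add, map_smul, smul_eq_mul] at e0
    have e2 : ⟪ι x₀, ι x₀⟫_ℝ = t₀ * ⟪ι x₀, ι v⟫_ℝ + ⟪ι x₀, ι w₀⟫_ℝ := by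
      conv_lhs => rw [hx₀eq]
      rw [hx₀eq, map_add, map_smul, inner_add_right, real_inner_smul_right]
    rw [e0, hELv, hELm w₀ hw₀, e2]
    ring
  -- strict maximality
  have hstrict : ∀ x : V, (∃ (t : ℝ) (w : V), 0 ≤ t ∧ Pm w = w ∧ x = t • v + w) →
      x ≠ x₀ → (1/2 : ℝ) * a x x - b u x < (1/2 : ℝ) * a x₀ x₀ - b u x₀ := by
    intro x hxF hne
    obtain ⟨t, w, ht, hw, hxeq⟩ := hxF
    set s := t / t₀ with hsdef
    have hs : 0 ≤ s := div_nonneg ht ht₀pos.le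
    set w' := w - s • w₀ with hw'def
    have hPmw' : Pm w' = w' := by
      rw [hw'def, map_sub, map_smul, hw, hw₀]
    have heq : s • x₀ + w' = x := by
      rw [hxeq, hx₀eq, hw'def, smul_add, smul_smul, hsdef,
        div_mul_cancel₀ t ht₀pos.ne']
      abel
    have hneq : s • x₀ + w' ≠ x₀ := by rw [heq]; exact hne
    have h2 := strict_max ι hι Pp Pm hP_sum a ha b f hf_mono hf_nonneg hrepr
      (fun u' => hgap u') u x₀ hPpx₀ hN1 hELm s hs w' hPmw' hneq
    rwa [heq] at h2
  -- assemble
  refine ⟨x₀, ⟨t₀, w₀, ht₀, hw₀, hx₀eq⟩, ⟨hPpx₀, hN1, hELm⟩, ?_, hstrict⟩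
  -- uniqueness of Nehari points in F
  intro x hxF hxN
  by_contra hne
  obtain ⟨hPpx, hxN1, hxN2⟩ := hxN
  obtain ⟨t₁, w₁, ht₁, hw₁, hxeq⟩ := hxF
  have hPpxeq : Pp x = t₁ • Pp v := by rw [hxeq]; exact hPpF t₁ w₁ hw₁
  have ht₁pos : 0 < t₁ := by
    rcases ht₁.eq_or_lt with h | h
    · exfalso
      apply hPpx
      rw [hPpxeq, ← h, zero_smul]
    · exact h
  have hEx : (1/2 : ℝ) * a x x - b u x < (1/2 : ℝ) * a x₀ x₀ - b u x₀ :=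
    hstrict x ⟨t₁, w₁, ht₁, hw₁, hxeq⟩ hne
  -- reverse strict inequality from x's Nehari property
  set s' := t₀ / t₁ with hs'def
  have hs' : 0 ≤ s' := div_nonneg ht₀ ht₁pos.le
  set w'' := w₀ - s' • w₁ with hw''def
  have hPmw'' : Pm w'' = w'' := by
    rw [hw''def, map_sub, map_smul, hw₀, hw₁]
  have heq' : s' • x + w'' = x₀ := by
    rw [hx₀eq, hxeq, hw''def, smul_add, smul_smul, hs'def,
      div_mul_cancel₀ t₀ ht₁pos.ne']
    abel
  have hneq' : s' • x + w'' ≠ x := by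
    rw [heq']
    intro hcontra
    exact hne hcontra.symm
  have h3 := strict_max ι hι Pp Pm hP_sum a ha b f hf_mono hf_nonneg hrepr
    (fun u' => hgap u') u x hPpx hxN1 hxN2 s' hs' w'' hPmw'' hneq'
  rw [heq'] at h3
  linarith
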